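/- arXiv:math/0110077 — 2 statements merged into one kernel-verified Lean document; each statement's English description precedes it below -/
import Mathlib

section
/- For all integers p, q ≥ 0 and every n ≥ p + q + 2, the following identity of polynomials in x₁,…,xₙ holds: s*_{(p+1|q)} + s*_{(p|q+1)} + (p+q+1)·s*_{(p|q)} = s*_{(p|0)} · s*_{(0|q)}. -/
open Finset

noncomputable section

/-- `μ : ℕ → ℕ` (0-indexed: `μ i` is the `(i+1)`-st part) is a partition. -/
def IsPartition (μ : ℕ → ℕ) : Prop := Antitone μ ∧ ∃ N, ∀ i, N ≤ i → μ i = 0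

/-- number of boxes `|μ|` -/
def psize (μ : ℕ → ℕ) : ℕ := Nat.card {p : ℕ × ℕ // p.2 < μ p.1}

/-- number of nonzero parts `ℓ(μ)` -/
def plen (μ : ℕ → ℕ) : ℕ := Nat.card {i : ℕ // 0 < μ i}

/-- conjugate partition (0-indexed) -/
def conjP (μ : ℕ → ℕ) : ℕ → ℕ := fun j => Nat.card {i : ℕ // j < μ i}

/-- depth `d(μ)`: the number of `i ≥ 1` (1-indexed) with `μᵢ ≥ i` -/
def depth (μ : ℕ → ℕ) : ℕ := Nat.card {i : ℕ // i < μ i}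

/-- containment of Young diagrams -/
def subP (μ ν : ℕ → ℕ) : Prop := ∀ i, μ i ≤ ν i

/-- `dim(μ,ν)`: number of saturated chains `μ = λ⁰ ⊂ λ¹ ⊂ ⋯ ⊂ λᵏ = ν`,
  `k = |ν| - |μ|`, `|λᵗ| = |μ| + t`. -/
def relDim (μ ν : ℕ → ℕ) : ℕ :=
  Nat.card {c : Fin (psize ν - psize μ + 1) → (ℕ → ℕ) //
    c 0 = μ ∧ c (Fin.last _) = ν ∧ (∀ t, IsPartition (c t)) ∧
    ∀ t : Fin (psize ν - psize μ),
      subP (c t.castSucc) (c t.succ) ∧ psize (c t.succ) = psize (c t.castSucc) + 1}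

/-- `dim ν` : number of standard tableaux of shape `ν` -/
def dimP (ν : ℕ → ℕ) : ℕ := relDim (fun _ => 0) ν

/-- the hook partition `(p|q) = (p+1, 1^q)` -/
def hookP (p q : ℕ) : ℕ → ℕ := fun i => if i = 0 then p + 1 else if i ≤ q then 1 else 0

/-- Frobenius coordinate `pᵢ = μᵢ - i` (0-indexed input `i`) -/
def frobP (μ : ℕ → ℕ) (i : ℕ) : ℕ := μ i - (i + 1)
/-- Frobenius coordinate `qᵢ = μ'ᵢ - i` (0-indexed input `i`) -/
def frobQ (μ : ℕ → ℕ) (i : ℕ) : ℕ := conjP μ i - (i + 1)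

/-- the ring of polynomials in `x₁,…,xₙ, y₁,…,yₙ` over `ℂ` -/
abbrev SSRing (n : ℕ) := MvPolynomial (Fin n ⊕ Fin n) ℂ

/-- the power series `1/∏_{i=1}^{k}(1 - cᵢ t)` (inverse computed via `invOfUnit`) -/
def denomInv (R : Type*) [CommRing R] (c : ℕ → R) (k : ℕ) : PowerSeries R :=
  PowerSeries.invOfUnit (∏ i ∈ Finset.range k, (1 - PowerSeries.C (R := R) (c i) * PowerSeries.X)) 1

/-- the power series `∏_{i=1}^{n} (1 + yᵢ t)/(1 - xᵢ t)` -/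
def hGenSeries (n : ℕ) : PowerSeries (SSRing n) :=
  (∏ i : Fin n, (1 + PowerSeries.C (R := SSRing n) (MvPolynomial.X (Sum.inr i)) * PowerSeries.X)) *
    PowerSeries.invOfUnit
      (∏ i : Fin n, (1 - PowerSeries.C (R := SSRing n) (MvPolynomial.X (Sum.inl i)) * PowerSeries.X)) 1

/-- `h` is the family of multiparameter complete homogeneous supersymmetric polynomials:
`h a k = h_{k;a}(x₁,…,xₙ;y₁,…,yₙ)`, characterized by `h_{k;a} = 0` for `k < 0`, `h_{0;a} = 1`, and
`∏_{i=1}^n (1+yᵢt)/(1-xᵢt) = ∑_{k≥0} h_{k;a} tᵏ/∏_{i=1}^k (1-aᵢt)` (an identity of formal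
power series in `t`, stated coefficientwise). -/
def IsH (n : ℕ) (h : (ℤ → ℂ) → ℤ → SSRing n) : Prop :=
  (∀ (a : ℤ → ℂ) (k : ℤ), k < 0 → h a k = 0) ∧ (∀ a, h a 0 = 1) ∧
  ∀ a : ℤ → ℂ, hGenSeries n = PowerSeries.mk (fun N =>
    ∑ k ∈ Finset.range (N + 1),
      h a k * PowerSeries.coeff (N - k)
        (denomInv (SSRing n) (fun i => MvPolynomial.C (a ((i : ℤ) + 1))) k))

/-- shift of a parameter sequence: `(τʳ a)ᵢ = a_{i+r}` -/
def tauSeq (a : ℤ → ℂ) (r : ℤ) : ℤ → ℂ := fun i => a (i + r)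

/-- dual sequence `âᵢ = -a_{-i+1}` -/
def adual (a : ℤ → ℂ) : ℤ → ℂ := fun i => -a (1 - i)

/-- the multiparameter Schur polynomial `s_{μ;a} = det[h_{μᵢ-i+j; τ^{1-j}a}]_{1≤i,j≤ℓ(μ)}` -/
def schurDet {n : ℕ} (h : (ℤ → ℂ) → ℤ → SSRing n) (a : ℤ → ℂ) (μ : ℕ → ℕ) : SSRing n :=
  Matrix.det (Matrix.of fun i j : Fin (plen μ) =>
    h (tauSeq a (-(j : ℕ) : ℤ)) ((μ (i : ℕ) : ℤ) - (i : ℕ) + (j : ℕ)))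

/-- the Frobenius-Schur sequence `aᵢ = i - 1/2` -/
def aFS : ℤ → ℂ := fun i => (i : ℂ) - 1/2


/-- falling factorial power of a polynomial: `p^{↓m} = p(p-1)⋯(p-m+1)` -/
def ffpoly {n : ℕ} (p : MvPolynomial (Fin n) ℚ) (m : ℕ) : MvPolynomial (Fin n) ℚ :=
  ∏ t ∈ Finset.range m, (p - (t : ℕ))

/-- the shifted Schur polynomial `s*_μ(x₁,…,xₙ)`, as an element of the fraction field of
`ℚ[x₁,…,xₙ]`: `det[(xᵢ+n-i)^{↓(μⱼ+n-j)}] / det[(xᵢ+n-i)^{↓(n-j)}]`, `1 ≤ i,j ≤ n`. -/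
def sstarFrac (n : ℕ) (μ : ℕ → ℕ) : FractionRing (MvPolynomial (Fin n) ℚ) :=
  algebraMap (MvPolynomial (Fin n) ℚ) _
      (Matrix.det (Matrix.of fun i j : Fin n =>
        ffpoly (MvPolynomial.X i + MvPolynomial.C ((n : ℚ) - 1 - ((i : ℕ) : ℚ)))
          (μ (j : ℕ) + (n - 1 - (j : ℕ))))) /
    algebraMap (MvPolynomial (Fin n) ℚ) _
      (Matrix.det (Matrix.of fun i j : Fin n =>
        ffpoly (MvPolynomial.X i + MvPolynomial.C ((n : ℚ) - 1 - ((i : ℕ) : ℚ)))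
          (n - 1 - (j : ℕ))))


section SShookAux
open Matrix
section generic
variable {n : ℕ} {R : Type*} [CommRing R]
lemma det_updateRow_finsetsum {ι : Type*} (s : Finset ι) (A : Matrix (Fin n) (Fin n) R)
    (j : Fin n) (f : ι → Fin n → R) :
    (A.updateRow j (∑ k ∈ s, f k)).det = ∑ k ∈ s, (A.updateRow j (f k)).det := by
  induction s using Finset.cons_induction with
  | empty =>
      rw [Finset.sum_empty, show (0 : Fin n → R) = (0 : R) • (0 : Fin n → R) from (zero_smul R _).symm,
        det_updateRow_smul]
      simp
  | cons a s ha ih =>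
      simp [Finset.sum_cons, det_updateRow_add, ih]

lemma det_updateRow_expand (A : Matrix (Fin n) (Fin n) R) (j : Fin n) (w : Fin n → R) :
    (A.updateRow j w).det = ∑ i, w i * (A.updateRow j (Pi.single i 1)).det := by
  conv_lhs => rw [show w = ∑ i, Pi.single i (w i) from (Finset.univ_sum_single w).symm]
  rw [det_updateRow_finsetsum]
  refine Finset.sum_congr rfl fun i _ => ?_
  have : Pi.single i (w i) = (w i) • (Pi.single i 1 : Fin n → R) := by
    rw [← Pi.single_smul, smul_eq_mul, mul_one]
  rw [this, det_updateRow_smul]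

lemma sum_det_updateRow_mul (A : Matrix (Fin n) (Fin n) R) (z : Fin n → R) :
    ∑ j, (A.updateRow j (fun i => z i * A j i)).det = (∑ i, z i) * A.det := by
  have h : ∀ j, (A.updateRow j (fun i => z i * A j i)).det
      = ∑ i, z i * (A j i * (A.updateRow j (Pi.single i 1)).det) := by
    intro j; rw [det_updateRow_expand]; exact Finset.sum_congr rfl fun i _ => by ring
  simp_rw [h]
  rw [Finset.sum_comm]
  rw [Finset.sum_mul]
  refine Finset.sum_congr rfl fun i _ => ?_
  rw [← Finset.mul_sum]
  congr 1
  have := congrArg (fun M : Matrix (Fin n) (Fin n) R => M i i) (Matrix.adjugate_mul A)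
  simp only [Matrix.mul_apply, Matrix.smul_apply, Matrix.one_apply_eq, smul_eq_mul, mul_one] at this
  rw [← this]
  refine Finset.sum_congr rfl fun j _ => ?_
  rw [Matrix.adjugate_apply]; ring

lemma grassmann_plucker (v : Fin (n+1) → Fin n → R) (B : Matrix (Fin n) (Fin n) R) (r₀ : Fin n) :
    ∑ k : Fin (n+1), (-1 : R) ^ (k : ℕ) *
      (Matrix.of fun j i => v (k.succAbove j) i).det * (B.updateRow r₀ (v k)).det = 0 := by
  set d : Fin n → R := fun i => (B.updateRow r₀ (Pi.single i 1)).det with hd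
  set t : Fin (n+1) → R := fun k => (B.updateRow r₀ (v k)).det with htdef
  have ht : ∀ k, t k = ∑ i, v k i * d i := fun k => det_updateRow_expand B r₀ (v k)
  set T : Matrix (Fin (n+1)) (Fin (n+1)) R :=
    Matrix.of (fun k => Fin.snoc (v k) (t k)) with hT
  have hTc : ∀ k (i : Fin n), T k i.castSucc = v k i := by
    intro k i; simp [hT, Fin.snoc_castSucc]
  have hTl : ∀ k, T k (Fin.last n) = t k := by
    intro k; simp [hT]
  -- det T = 0 since last column is a combination of the others
  have hdetT : T.det = 0 := by
    set c : Fin (n+1) → R := Fin.snoc d 0 with hc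
    have hcol : (fun k => ∑ i, (c i) • T k i) = fun k => T k (Fin.last n) := by
      funext k
      rw [Fin.sum_univ_castSucc]
      simp only [hc, Fin.snoc_last, Fin.snoc_castSucc, zero_smul, add_zero, smul_eq_mul]
      rw [hTl, ht k, zero_mul, add_zero]
      exact Finset.sum_congr rfl fun i _ => by rw [hTc]; ring
    have h1 : (T.updateCol (Fin.last n) (fun k => ∑ i, (c i) • T k i)).det
        = c (Fin.last n) • T.det := Matrix.det_updateCol_sum T (Fin.last n) c
    rw [hcol, Matrix.updateCol_eq_self] at h1
    rw [h1]
    simp [hc]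
  -- Laplace expansion along the last column
  have hexp := Matrix.det_succ_column T (Fin.last n)
  rw [hdetT] at hexp
  have hsub : ∀ k : Fin (n+1),
      (T.submatrix k.succAbove (Fin.last n).succAbove) = Matrix.of fun j i => v (k.succAbove j) i := by
    intro k; ext j i
    simp [Matrix.submatrix_apply, Fin.succAbove_last, hTc]
  have h2 : (0 : R) = (-1) ^ n * ∑ k : Fin (n+1), (-1 : R) ^ (k : ℕ) *
      (Matrix.of fun j i => v (k.succAbove j) i).det * (B.updateRow r₀ (v k)).det := by
    rw [hexp, Finset.mul_sum]
    refine Finset.sum_congr rfl fun k _ => ?_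
    rw [hsub k, hTl]
    rw [pow_add]
    simp only [Fin.val_last]
    ring
  have h3 : (-1 : R) ^ n * ((-1 : R) ^ n * ∑ k : Fin (n+1), (-1 : R) ^ (k : ℕ) *
      (Matrix.of fun j i => v (k.succAbove j) i).det * (B.updateRow r₀ (v k)).det) = 0 := by
    rw [← h2, mul_zero]
  rwa [← mul_assoc, ← pow_add, ← two_mul, pow_mul, neg_one_sq, one_pow, one_mul] at h3

end generic

namespace SShook

variable (n : ℕ)

abbrev Rg (n : ℕ) := MvPolynomial (Fin n) ℚ

def zv : Fin n → Rg n := fun i => MvPolynomial.X i + MvPolynomial.C ((n : ℚ) - 1 - ((i : ℕ) : ℚ))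

def rowMat (m : Fin n → ℕ) : Matrix (Fin n) (Fin n) (Rg n) :=
  Matrix.of fun j i => ffpoly (zv n i) (m j)

def Dt (m : Fin n → ℕ) : Rg n := (rowMat n m).det

lemma ffpoly_succ {n : ℕ} (pp : Rg n) (m : ℕ) :
    ffpoly pp (m + 1) = ffpoly pp m * (pp - (m : ℕ)) := Finset.prod_range_succ _ _

lemma mul_ffpoly {n : ℕ} (pp : Rg n) (m : ℕ) :
    pp * ffpoly pp m = ffpoly pp (m + 1) + (m : Rg n) * ffpoly pp m := by
  rw [ffpoly_succ]; ring

lemma updateRow_rowMat (m : Fin n → ℕ) (j : Fin n) (k : ℕ) :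
    (rowMat n m).updateRow j (fun i => ffpoly (zv n i) k) = rowMat n (Function.update m j k) := by
  ext j' i
  by_cases h : j' = j <;> simp [Matrix.updateRow_apply, Function.update_apply, h, rowMat]

lemma Dt_eq_zero {m : Fin n → ℕ} {j j' : Fin n} (hne : j ≠ j') (h : m j = m j') :
    Dt n m = 0 :=
  Matrix.det_zero_of_row_eq hne (by funext i; simp [rowMat, h])

lemma det_colform (m : Fin n → ℕ) :
    (Matrix.of fun i j : Fin n => ffpoly (zv n i) (m j)).det = Dt n m := by
  rw [Dt, ← Matrix.det_transpose]
  rfl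

lemma trace_Dt (m : Fin n → ℕ) :
    (∑ i, zv n i) * Dt n m =
      (∑ j, Dt n (Function.update m j (m j + 1))) + ((∑ j, m j : ℕ) : Rg n) * Dt n m := by
  rw [Dt, ← sum_det_updateRow_mul (rowMat n m) (zv n)]
  have h : ∀ j, ((rowMat n m).updateRow j (fun i => zv n i * rowMat n m j i)).det
      = Dt n (Function.update m j (m j + 1)) + ((m j : ℕ) : Rg n) * Dt n m := by
    intro j
    have hfun : (fun i => zv n i * rowMat n m j i)
        = (fun i => ffpoly (zv n i) (m j + 1))
          + ((m j : ℕ) : Rg n) • (fun i => ffpoly (zv n i) (m j)) := by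
      funext i
      simp only [Pi.add_apply, Pi.smul_apply, smul_eq_mul, rowMat, Matrix.of_apply]
      rw [mul_ffpoly]
    rw [hfun, Matrix.det_updateRow_add, Matrix.det_updateRow_smul, updateRow_rowMat]
    have h2 : (fun i => ffpoly (zv n i) (m j)) = rowMat n m j := rfl
    rw [h2, Matrix.updateRow_eq_self]
    rfl
  simp_rw [h]
  rw [Finset.sum_add_distrib, ← Finset.sum_mul, Nat.cast_sum]
  simp only [Dt]

def mdel : Fin n → ℕ := fun j => n - 1 - (j : ℕ)

def mhook (p q : ℕ) : Fin n → ℕ := fun j => hookP p q (j : ℕ) + (n - 1 - (j : ℕ))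

lemma zv_inj : Function.Injective (zv n) := by
  intro a b hab
  by_contra hne
  have hs0 : (Finsupp.single a 1 : Fin n →₀ ℕ) ≠ 0 := by simp
  have e1 : MvPolynomial.coeff (Finsupp.single a 1) (zv n a) = 1 := by
    rw [zv, MvPolynomial.coeff_add, MvPolynomial.coeff_C, if_neg (fun h => hs0 h.symm),
      MvPolynomial.coeff_X, add_zero, if_pos rfl]
  have hba : ¬ (Finsupp.single b (1 : ℕ) = Finsupp.single a 1) := by
    rw [Finsupp.single_left_inj one_ne_zero]
    exact fun h => hne h.symm
  have e2 : MvPolynomial.coeff (Finsupp.single a 1) (zv n b) = 0 := by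
    rw [zv, MvPolynomial.coeff_add, MvPolynomial.coeff_C, if_neg (fun h => hs0 h.symm),
      MvPolynomial.coeff_X', if_neg hba, add_zero]
  rw [hab, e2] at e1
  exact one_ne_zero e1.symm

lemma Dt_mdel_ne_zero : Dt n (mdel n) ≠ 0 := by
  classical
  set P : Fin n → Polynomial (Rg n) :=
    fun j => ∏ t ∈ Finset.range (j : ℕ), (Polynomial.X - (t : Polynomial (Rg n))) with hP
  have hfac : ∀ t : ℕ, (Polynomial.X - (t : Polynomial (Rg n)))
      = Polynomial.X - Polynomial.C ((t : ℕ) : Rg n) := by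
    intro t; rw [Polynomial.C_eq_natCast]
  have hmonic : ∀ j, (P j).Monic := by
    intro j
    refine Polynomial.monic_prod_of_monic _ _ fun t _ => ?_
    rw [hfac]; exact Polynomial.monic_X_sub_C _
  have hdeg : ∀ j : Fin n, (P j).natDegree = (j : ℕ) := by
    intro j
    rw [hP, Polynomial.natDegree_prod_of_monic _ _ (fun t _ => by rw [hfac]; exact Polynomial.monic_X_sub_C _)]
    simp [hfac, Polynomial.natDegree_X_sub_C]
  have heval : ∀ (x : Rg n) (j : Fin n), (P j).eval x = ffpoly x (j : ℕ) := by
    intro x j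
    rw [hP, Polynomial.eval_prod, ffpoly]
    exact Finset.prod_congr rfl fun t _ => by simp
  have hvand : (Matrix.vandermonde (zv n)).det
      = (Matrix.of fun i j : Fin n => ffpoly (zv n i) ((j : Fin n) : ℕ)).det := by
    rw [Matrix.det_eval_matrixOfPolynomials_eq_det_vandermonde (zv n) P hdeg hmonic]
    congr 1; ext i j; rw [Matrix.of_apply, Matrix.of_apply, heval]
  have hvne : (Matrix.vandermonde (zv n)).det ≠ 0 :=
    Matrix.det_vandermonde_ne_zero_iff.mpr (zv_inj n)
  have htr : (rowMat n (mdel n))ᵀ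
      = (Matrix.of fun i j : Fin n => ffpoly (zv n i) ((j : Fin n) : ℕ)).submatrix id (Fin.revPerm) := by
    ext i j
    simp only [Matrix.transpose_apply, rowMat, Matrix.of_apply, Matrix.submatrix_apply, id_eq,
      Fin.revPerm_apply, mdel, Fin.val_rev]
    have harg : n - 1 - (j : ℕ) = n - ((j : ℕ) + 1) := by omega
    rw [harg]
  have : Dt n (mdel n) = (Equiv.Perm.sign (Fin.revPerm : Equiv.Perm (Fin n)) : ℤ)
      * (Matrix.of fun i j : Fin n => ffpoly (zv n i) ((j : Fin n) : ℕ)).det := by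
    rw [Dt, ← Matrix.det_transpose, htr, Matrix.det_permute']
  rw [this]
  refine mul_ne_zero ?_ (by rwa [← hvand])
  rcases Int.units_eq_one_or (Equiv.Perm.sign (Fin.revPerm : Equiv.Perm (Fin n))) with h | h <;>
    rw [h] <;> simp

lemma val_succAbove {N : ℕ} (k : Fin (N + 1)) (j : Fin N) :
    ((k.succAbove j : Fin (N + 1)) : ℕ) = if (j : ℕ) < (k : ℕ) then (j : ℕ) else (j : ℕ) + 1 := by
  rcases lt_or_ge ((j : ℕ)) ((k : ℕ)) with h | h
  · rw [Fin.succAbove_of_castSucc_lt _ _ (by rwa [Fin.lt_def]), if_pos h, Fin.coe_castSucc]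
  · rw [Fin.succAbove_of_le_castSucc _ _ (by rw [Fin.le_def, Fin.coe_castSucc]; exact h),
      if_neg (not_lt.mpr h), Fin.val_succ]

lemma sum_mhook (p q : ℕ) (hq : q + 1 ≤ n) :
    ∑ j, mhook n p q j = (∑ j, mdel n j) + (p + q + 1) := by
  have h1 : ∑ j : Fin n, hookP p q (j : ℕ) = p + q + 1 := by
    rw [Fin.sum_univ_eq_sum_range (fun i => hookP p q i), ← Finset.sum_range_add_sum_Ico _ hq]
    have h2 : ∑ i ∈ Finset.Ico (q + 1) n, hookP p q i = 0 := by
      refine Finset.sum_eq_zero fun x hx => ?_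
      rw [Finset.mem_Ico] at hx
      simp only [hookP]
      rw [if_neg (by omega), if_neg (by omega)]
    have h3 : ∑ i ∈ Finset.range (q + 1), hookP p q i = p + q + 1 := by
      rw [Finset.sum_range_succ']
      have hone : ∀ i ∈ Finset.range q, hookP p q (i + 1) = 1 := by
        intro i hi
        rw [Finset.mem_range] at hi
        simp only [hookP]
        rw [if_neg (by omega), if_pos (by omega)]
      rw [Finset.sum_congr rfl hone, Finset.sum_const, Finset.card_range, smul_eq_mul, mul_one,
        show hookP p q 0 = p + 1 from by simp [hookP]]
      omega
    omega
  simp only [mhook, mdel]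
  rw [Finset.sum_add_distrib, h1]
  omega

lemma update_eq {m m' : Fin n → ℕ} {j : Fin n} {k : ℕ} (h1 : k = m' j)
    (h2 : ∀ j', j' ≠ j → m j' = m' j') : Function.update m j k = m' := by
  funext j'
  rcases eq_or_ne j' j with h | h
  · subst h; rw [Function.update_self]; exact h1
  · rw [Function.update_of_ne h]; exact h2 j' h

lemma bump_vanish {m : Fin n → ℕ} {j : Fin n} (h1 : 1 ≤ (j : ℕ))
    (h : m ⟨(j : ℕ) - 1, by have := j.isLt; omega⟩ = m j + 1) :
    Dt n (Function.update m j (m j + 1)) = 0 := by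
  have hne : (⟨(j : ℕ) - 1, by have := j.isLt; omega⟩ : Fin n) ≠ j := by
    intro hh
    rw [Fin.ext_iff] at hh
    simp only at hh
    omega
  refine Dt_eq_zero n hne ?_
  rw [Function.update_of_ne hne, Function.update_self, h]

-- e2 : trace identity for the Vandermonde-type determinant
lemma traceV (hn : 1 ≤ n) :
    (∑ i, zv n i) * Dt n (mdel n)
      = Dt n (mhook n 0 0) + ((∑ j, mdel n j : ℕ) : Rg n) * Dt n (mdel n) := by
  have t := trace_Dt n (mdel n)
  have h0 : 0 < n := hn
  have hsum : ∑ j, Dt n (Function.update (mdel n) j (mdel n j + 1)) = Dt n (mhook n 0 0) := by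
    have hzero : ∀ x ∈ Finset.univ, x ∉ ({⟨0, h0⟩} : Finset (Fin n)) →
        Dt n (Function.update (mdel n) x (mdel n x + 1)) = 0 := by
      intro x _ hx
      rw [Finset.mem_singleton] at hx
      have hxv : 1 ≤ (x : ℕ) := by
        rcases Nat.eq_zero_or_pos (x : ℕ) with h | h
        · exact absurd (Fin.val_injective (by simpa using h)) hx
        · exact h
      refine bump_vanish n hxv ?_
      have := x.isLt
      simp only [mdel]
      omega
    rw [← Finset.sum_subset (Finset.subset_univ _) hzero]
    rw [Finset.sum_singleton]
    refine congrArg (Dt n) (update_eq n ?_ ?_)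
    · simp only [mdel, mhook, hookP]
      norm_num
      omega
    · intro j' hj'
      have hv : (j' : ℕ) ≠ 0 := fun h => hj' (Fin.val_injective (by simpa using h))
      have := j'.isLt
      simp only [mdel, mhook, hookP]
      rw [if_neg hv, if_neg (by omega)]
      omega
  rw [hsum] at t
  exact t

lemma upd_mdel_top (h0 : 0 < n) : Function.update (mdel n) ⟨0, h0⟩ n = mhook n 0 0 := by
  refine update_eq n ?_ ?_
  · show (n : ℕ) = hookP 0 0 0 + (n - 1 - 0)
    rw [show hookP 0 0 0 = 1 from by simp [hookP]]
    omega
  · intro j' hj'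
    have hv : (j' : ℕ) ≠ 0 := fun h => hj' (Fin.val_injective (by simpa using h))
    have := j'.isLt
    simp only [mdel, mhook, hookP]
    rw [if_neg hv, if_neg (by omega)]
    omega

lemma traceC (p q : ℕ) (hq : 1 ≤ q) (hn : p + q + 2 ≤ n) (h1n : 1 < n) :
    (∑ i, zv n i) * Dt n (mhook n p q)
      = Dt n (mhook n (p + 1) q)
        + Dt n (Function.update (mhook n p q) ⟨1, h1n⟩ n)
        + Dt n (mhook n p (q + 1))
        + (((∑ j, mdel n j) + (p + q + 1) : ℕ) : Rg n) * Dt n (mhook n p q) := by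
  have t := trace_Dt n (mhook n p q)
  rw [sum_mhook n p q (by omega)] at t
  have h0 : 0 < n := by omega
  have hqn : q + 1 < n := by omega
  have hzero : ∀ x ∈ Finset.univ,
      x ∉ ({⟨0, h0⟩, ⟨1, h1n⟩, ⟨q + 1, hqn⟩} : Finset (Fin n)) →
      Dt n (Function.update (mhook n p q) x (mhook n p q x + 1)) = 0 := by
    intro x _ hx
    simp only [Finset.mem_insert, Finset.mem_singleton] at hx
    push_neg at hx
    obtain ⟨hx0, hx1, hxq⟩ := hx
    have hv0 : (x : ℕ) ≠ 0 := fun h => hx0 (Fin.val_injective (by simpa using h))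
    have hv1 : (x : ℕ) ≠ 1 := fun h => hx1 (Fin.val_injective (by simpa using h))
    have hvq : (x : ℕ) ≠ q + 1 := fun h => hxq (Fin.val_injective (by simpa using h))
    refine bump_vanish n (by omega) ?_
    have := x.isLt
    show hookP p q ((x : ℕ) - 1) + (n - 1 - ((x : ℕ) - 1))
      = hookP p q (x : ℕ) + (n - 1 - (x : ℕ)) + 1
    simp only [hookP]
    split_ifs <;> omega
  have hsum : ∑ j, Dt n (Function.update (mhook n p q) j (mhook n p q j + 1))
      = Dt n (mhook n (p + 1) q)
        + (Dt n (Function.update (mhook n p q) ⟨1, h1n⟩ n) + Dt n (mhook n p (q + 1))) := by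
    rw [← Finset.sum_subset (Finset.subset_univ _) hzero]
    rw [Finset.sum_insert (by simp only [Finset.mem_insert, Finset.mem_singleton, Fin.ext_iff]; omega),
      Finset.sum_insert (by simp only [Finset.mem_singleton, Fin.ext_iff]; omega),
      Finset.sum_singleton]
    congr 1
    · refine congrArg (Dt n) (update_eq n ?_ ?_)
      · show hookP p q 0 + (n - 1 - 0) + 1 = hookP (p + 1) q 0 + (n - 1 - 0)
        rw [show hookP p q 0 = p + 1 from by simp [hookP],
          show hookP (p + 1) q 0 = p + 2 from by simp [hookP]]
        omega
      · intro j' hj'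
        have hv : (j' : ℕ) ≠ 0 := fun h => hj' (Fin.val_injective (by simpa using h))
        simp only [mhook, hookP]
        rw [if_neg hv, if_neg hv]
    congr 1
    · refine congrArg (Dt n) ?_
      have hval : mhook n p q ⟨1, h1n⟩ + 1 = n := by
        show hookP p q 1 + (n - 1 - 1) + 1 = n
        simp only [hookP]
        rw [if_neg one_ne_zero, if_pos hq]
        omega
      rw [hval]
    · refine congrArg (Dt n) (update_eq n ?_ ?_)
      · show hookP p q (q + 1) + (n - 1 - (q + 1)) + 1
          = hookP p (q + 1) (q + 1) + (n - 1 - (q + 1))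
        rw [show hookP p q (q + 1) = 0 from by simp [hookP],
          show hookP p (q + 1) (q + 1) = 1 from by simp [hookP]]
        omega
      · intro j' hj'
        have hv : (j' : ℕ) ≠ q + 1 := fun h => hj' (Fin.val_injective (by simpa using h))
        have := j'.isLt
        simp only [mhook, hookP]
        split_ifs <;> omega
  rw [hsum] at t
  linear_combination t

lemma traceC0 (p : ℕ) (hn : p + 2 ≤ n) (h1n : 1 < n) :
    (∑ i, zv n i) * Dt n (mhook n p 0)
      = Dt n (mhook n (p + 1) 0)
        + Dt n (mhook n p 1)
        + (((∑ j, mdel n j) + (p + 1) : ℕ) : Rg n) * Dt n (mhook n p 0) := by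
  have t := trace_Dt n (mhook n p 0)
  rw [sum_mhook n p 0 (by omega)] at t
  have h0 : 0 < n := by omega
  have hzero : ∀ x ∈ Finset.univ,
      x ∉ ({⟨0, h0⟩, ⟨1, h1n⟩} : Finset (Fin n)) →
      Dt n (Function.update (mhook n p 0) x (mhook n p 0 x + 1)) = 0 := by
    intro x _ hx
    simp only [Finset.mem_insert, Finset.mem_singleton] at hx
    push_neg at hx
    obtain ⟨hx0, hx1⟩ := hx
    have hv0 : (x : ℕ) ≠ 0 := fun h => hx0 (Fin.val_injective (by simpa using h))
    have hv1 : (x : ℕ) ≠ 1 := fun h => hx1 (Fin.val_injective (by simpa using h))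
    refine bump_vanish n (by omega) ?_
    have := x.isLt
    show hookP p 0 ((x : ℕ) - 1) + (n - 1 - ((x : ℕ) - 1))
      = hookP p 0 (x : ℕ) + (n - 1 - (x : ℕ)) + 1
    simp only [hookP]
    split_ifs <;> omega
  have hsum : ∑ j, Dt n (Function.update (mhook n p 0) j (mhook n p 0 j + 1))
      = Dt n (mhook n (p + 1) 0) + Dt n (mhook n p 1) := by
    rw [← Finset.sum_subset (Finset.subset_univ _) hzero]
    rw [Finset.sum_insert (by simp only [Finset.mem_singleton, Fin.ext_iff]; omega),
      Finset.sum_singleton]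
    congr 1
    · refine congrArg (Dt n) (update_eq n ?_ ?_)
      · show hookP p 0 0 + (n - 1 - 0) + 1 = hookP (p + 1) 0 0 + (n - 1 - 0)
        rw [show hookP p 0 0 = p + 1 from by simp [hookP],
          show hookP (p + 1) 0 0 = p + 2 from by simp [hookP]]
        omega
      · intro j' hj'
        have hv : (j' : ℕ) ≠ 0 := fun h => hj' (Fin.val_injective (by simpa using h))
        simp only [mhook, hookP]
        rw [if_neg hv, if_neg hv]
    · refine congrArg (Dt n) (update_eq n ?_ ?_)
      · show hookP p 0 1 + (n - 1 - 1) + 1 = hookP p 1 1 + (n - 1 - 1)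
        rw [show hookP p 0 1 = 0 from by simp [hookP],
          show hookP p 1 1 = 1 from by simp [hookP]]
        omega
      · intro j' hj'
        have hv : (j' : ℕ) ≠ 1 := fun h => hj' (Fin.val_injective (by simpa using h))
        have := j'.isLt
        simp only [mhook, hookP]
        split_ifs <;> omega
  rw [hsum] at t
  linear_combination t

def gseq (n p q : ℕ) : ℕ → ℕ := fun k =>
  if k = 0 then n + p else if k = 1 then n else if k ≤ q + 1 then n + 1 - k else n - k

lemma mhook_val (p q : ℕ) (j : Fin n) (hqn : q + 2 ≤ n) :
    mhook n p q j = if (j : ℕ) = 0 then n + p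
      else if (j : ℕ) ≤ q then n - (j : ℕ) else n - 1 - (j : ℕ) := by
  have hj := j.isLt
  show hookP p q (j : ℕ) + (n - 1 - (j : ℕ)) = _
  by_cases hj0 : (j : ℕ) = 0
  · rw [if_pos hj0, hj0, show hookP p q 0 = p + 1 from by simp [hookP]]
    omega
  · by_cases hjq : (j : ℕ) ≤ q
    · rw [if_neg hj0, if_pos hjq, show hookP p q (j : ℕ) = 1 from by simp [hookP, hj0, hjq]]
      omega
    · rw [if_neg hj0, if_neg hjq, show hookP p q (j : ℕ) = 0 from by simp [hookP, hj0, hjq]]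
      omega

lemma gp_identity (p q : ℕ) (hq : 1 ≤ q) (hn : p + q + 2 ≤ n) (h1n : 1 < n) :
    Dt n (mhook n 0 q) * Dt n (mhook n p 0)
      - Dt n (mhook n p q) * Dt n (mhook n 0 0)
      + Dt n (Function.update (mhook n p q) ⟨1, h1n⟩ n) * Dt n (mdel n) = 0 := by
  have h0 : 0 < n := by omega
  have g0 : gseq n p q 0 = n + p := by simp [gseq]
  have g1 : gseq n p q 1 = n := by simp [gseq]
  have g2 : gseq n p q 2 = n - 1 := by
    simp only [gseq]
    rw [if_neg (by omega), if_neg (by omega), if_pos (by omega)]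
    omega
  have hGP := grassmann_plucker (n := n) (fun k i => ffpoly (zv n i) (gseq n p q (k : ℕ)))
    (rowMat n (mdel n)) ⟨0, h0⟩
  have hstep : ∑ k : Fin (n + 1), (-1 : Rg n) ^ (k : ℕ)
        * Dt n (fun j => gseq n p q ((k.succAbove j : Fin (n + 1)) : ℕ))
        * Dt n (Function.update (mdel n) ⟨0, h0⟩ (gseq n p q (k : ℕ))) = 0 := by
    rw [← hGP]
    refine Finset.sum_congr rfl fun k _ => ?_
    rw [updateRow_rowMat n (mdel n) ⟨0, h0⟩ (gseq n p q (k : ℕ))]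
    rfl
  have hzero : ∀ k ∈ Finset.univ,
      k ∉ ({⟨0, by omega⟩, ⟨1, by omega⟩, ⟨2, by omega⟩} : Finset (Fin (n + 1))) →
      (-1 : Rg n) ^ (k : ℕ)
        * Dt n (fun j => gseq n p q ((k.succAbove j : Fin (n + 1)) : ℕ))
        * Dt n (Function.update (mdel n) ⟨0, h0⟩ (gseq n p q (k : ℕ))) = 0 := by
    intro k _ hk
    simp only [Finset.mem_insert, Finset.mem_singleton] at hk
    push_neg at hk
    obtain ⟨hk0, hk1, hk2⟩ := hk
    have hv0 : (k : ℕ) ≠ 0 := fun h => hk0 (Fin.val_injective (by simpa using h))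
    have hv1 : (k : ℕ) ≠ 1 := fun h => hk1 (Fin.val_injective (by simpa using h))
    have hv2 : (k : ℕ) ≠ 2 := fun h => hk2 (Fin.val_injective (by simpa using h))
    have hk3 : 3 ≤ (k : ℕ) := by omega
    have hkn : (k : ℕ) ≤ n := by have := k.isLt; omega
    have hB : Dt n (Function.update (mdel n) ⟨0, h0⟩ (gseq n p q (k : ℕ))) = 0 := by
      rcases le_or_gt ((k : ℕ)) (q + 1) with hc | hc
      · have hlt : (k : ℕ) - 2 < n := by omega
        have hne : (⟨(k : ℕ) - 2, hlt⟩ : Fin n) ≠ ⟨0, h0⟩ := by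
          intro hh; rw [Fin.ext_iff] at hh; simp only at hh; omega
        refine Dt_eq_zero n hne ?_
        rw [Function.update_of_ne hne, Function.update_self]
        show n - 1 - ((k : ℕ) - 2) = gseq n p q (k : ℕ)
        simp only [gseq]
        rw [if_neg hv0, if_neg hv1, if_pos hc]
        omega
      · have hlt : (k : ℕ) - 1 < n := by omega
        have hne : (⟨(k : ℕ) - 1, hlt⟩ : Fin n) ≠ ⟨0, h0⟩ := by
          intro hh; rw [Fin.ext_iff] at hh; simp only at hh; omega
        refine Dt_eq_zero n hne ?_
        rw [Function.update_of_ne hne, Function.update_self]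
        show n - 1 - ((k : ℕ) - 1) = gseq n p q (k : ℕ)
        simp only [gseq]
        rw [if_neg hv0, if_neg hv1, if_neg (not_le.mpr hc)]
        omega
    rw [hB, mul_zero]
  rw [← Finset.sum_subset (Finset.subset_univ _) hzero] at hstep
  rw [Finset.sum_insert (by simp only [Finset.mem_insert, Finset.mem_singleton, Fin.ext_iff]; omega),
    Finset.sum_insert (by simp only [Finset.mem_singleton, Fin.ext_iff]; omega),
    Finset.sum_singleton] at hstep
  -- identify the six determinants
  have A0 : (fun j => gseq n p q (((⟨0, by omega⟩ : Fin (n + 1)).succAbove j : Fin (n + 1)) : ℕ))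
      = mhook n 0 q := by
    funext j
    have hj := j.isLt
    rw [val_succAbove, mhook_val n 0 q j (by omega)]
    rw [if_neg (Nat.not_lt_zero _)]
    by_cases hj0 : (j : ℕ) = 0
    · rw [if_pos hj0, hj0, show (0 : ℕ) + 1 = 1 from rfl, g1]
      omega
    · by_cases hjq : (j : ℕ) ≤ q
      · rw [if_neg hj0, if_pos hjq]
        simp only [gseq]
        rw [if_neg (by omega), if_neg (by omega), if_pos (by omega)]
        omega
      · rw [if_neg hj0, if_neg hjq]
        simp only [gseq]
        rw [if_neg (by omega), if_neg (by omega), if_neg (by omega)]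
        omega
  have A1 : (fun j => gseq n p q (((⟨1, by omega⟩ : Fin (n + 1)).succAbove j : Fin (n + 1)) : ℕ))
      = mhook n p q := by
    funext j
    have hj := j.isLt
    rw [val_succAbove, mhook_val n p q j (by omega)]
    by_cases hj0 : (j : ℕ) = 0
    · rw [if_pos (show (j : ℕ) < ((⟨1, by omega⟩ : Fin (n + 1)) : ℕ) by simp only; omega),
        if_pos hj0, hj0, g0]
    · rw [if_neg (by simp only; omega), if_neg hj0]
      by_cases hjq : (j : ℕ) ≤ q
      · rw [if_pos hjq]
        simp only [gseq]
        rw [if_neg (by omega), if_neg (by omega), if_pos (by omega)]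
        omega
      · rw [if_neg hjq]
        simp only [gseq]
        rw [if_neg (by omega), if_neg (by omega), if_neg (by omega)]
        omega
  have A2 : (fun j => gseq n p q (((⟨2, by omega⟩ : Fin (n + 1)).succAbove j : Fin (n + 1)) : ℕ))
      = Function.update (mhook n p q) ⟨1, h1n⟩ n := by
    funext j
    have hj := j.isLt
    rcases eq_or_ne j ⟨1, h1n⟩ with he | hne
    · subst he
      rw [Function.update_self, val_succAbove]
      rw [if_pos (by simp only; omega), g1]
    · have hv : (j : ℕ) ≠ 1 := fun h => hne (Fin.val_injective (by simpa using h))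
      rw [Function.update_of_ne hne, val_succAbove, mhook_val n p q j (by omega)]
      by_cases hj0 : (j : ℕ) = 0
      · rw [if_pos (by simp only; omega), if_pos hj0, hj0, g0]
      · rw [if_neg (by simp only; omega), if_neg hj0]
        by_cases hjq : (j : ℕ) ≤ q
        · rw [if_pos hjq]
          simp only [gseq]
          rw [if_neg (by omega), if_neg (by omega), if_pos (by omega)]
          omega
        · rw [if_neg hjq]
          simp only [gseq]
          rw [if_neg (by omega), if_neg (by omega), if_neg (by omega)]
          omega
  have u0 : Function.update (mdel n) ⟨0, h0⟩ (gseq n p q ((⟨0, by omega⟩ : Fin (n + 1)) : ℕ))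
      = mhook n p 0 := by
    rw [show ((⟨0, by omega⟩ : Fin (n + 1)) : ℕ) = 0 from rfl, g0]
    refine update_eq n ?_ ?_
    · rw [mhook_val n p 0 _ (by omega), if_pos rfl]
    · intro j' hj'
      have hv : (j' : ℕ) ≠ 0 := fun h => hj' (Fin.val_injective (by simpa using h))
      rw [mhook_val n p 0 _ (by omega), if_neg hv, if_neg (by omega)]
      rfl
  have u1 : Function.update (mdel n) ⟨0, h0⟩ (gseq n p q ((⟨1, by omega⟩ : Fin (n + 1)) : ℕ))
      = mhook n 0 0 := by
    rw [show ((⟨1, by omega⟩ : Fin (n + 1)) : ℕ) = 1 from rfl, g1]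
    exact upd_mdel_top n h0
  have u2 : Function.update (mdel n) ⟨0, h0⟩ (gseq n p q ((⟨2, by omega⟩ : Fin (n + 1)) : ℕ))
      = mdel n := by
    rw [show ((⟨2, by omega⟩ : Fin (n + 1)) : ℕ) = 2 from rfl, g2]
    refine update_eq n ?_ (fun j' _ => rfl)
    rfl
  rw [A0, A1, A2, u0, u1, u2] at hstep
  rw [show (((⟨0, by omega⟩ : Fin (n + 1))) : ℕ) = 0 from rfl,
    show (((⟨1, by omega⟩ : Fin (n + 1))) : ℕ) = 1 from rfl,
    show (((⟨2, by omega⟩ : Fin (n + 1))) : ℕ) = 2 from rfl,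
    pow_zero, pow_one, neg_one_sq] at hstep
  linear_combination hstep

lemma key (p q : ℕ) (hn : p + q + 2 ≤ n) :
    (Dt n (mhook n (p + 1) q) + Dt n (mhook n p (q + 1))
        + ((p : Rg n) + (q : Rg n) + 1) * Dt n (mhook n p q)) * Dt n (mdel n)
      = Dt n (mhook n p 0) * Dt n (mhook n 0 q) := by
  have h1n : 1 < n := by omega
  have e2 := traceV n (by omega)
  push_cast at e2
  rcases Nat.eq_zero_or_pos q with hq0 | hq
  · subst hq0
    have e1 := traceC0 n p (by omega) h1n
    push_cast at e1
    push_cast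
    linear_combination Dt n (mhook n p 0) * e2 - Dt n (mdel n) * e1
  · have e1 := traceC n p q hq (by omega) h1n
    have e3 := gp_identity n p q hq (by omega) h1n
    push_cast at e1
    push_cast
    linear_combination Dt n (mhook n p q) * e2 - Dt n (mdel n) * e1 - e3

lemma sstarFrac_hook (p q : ℕ) :
    sstarFrac n (hookP p q)
      = algebraMap (MvPolynomial (Fin n) ℚ) (FractionRing (MvPolynomial (Fin n) ℚ))
          (Dt n (mhook n p q))
        / algebraMap (MvPolynomial (Fin n) ℚ) (FractionRing (MvPolynomial (Fin n) ℚ))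
          (Dt n (mdel n)) := by
  rw [sstarFrac,
    show (Matrix.det (Matrix.of fun i j : Fin n =>
        ffpoly (MvPolynomial.X i + MvPolynomial.C ((n : ℚ) - 1 - ((i : ℕ) : ℚ)))
          (hookP p q (j : ℕ) + (n - 1 - (j : ℕ))))) = Dt n (mhook n p q) from det_colform n _,
    show (Matrix.det (Matrix.of fun i j : Fin n =>
        ffpoly (MvPolynomial.X i + MvPolynomial.C ((n : ℚ) - 1 - ((i : ℕ) : ℚ)))
          (n - 1 - (j : ℕ)))) = Dt n (mdel n) from det_colform n _]

end SShook
end SShookAux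

/-- For all `p, q ≥ 0` and `n ≥ p + q + 2`, the identity of
(rational functions which are in fact) polynomials in `x₁,…,xₙ`:
`s*_{(p+1|q)} + s*_{(p|q+1)} + (p+q+1)·s*_{(p|q)} = s*_{(p|0)} · s*_{(0|q)}`. -/
theorem shifted_schur_hook_relation
    (p q n : ℕ) (hn : p + q + 2 ≤ n) :
    sstarFrac n (hookP (p + 1) q) + sstarFrac n (hookP p (q + 1)) +
        ((p : FractionRing (MvPolynomial (Fin n) ℚ)) + (q : ℕ) + 1) * sstarFrac n (hookP p q) =
      sstarFrac n (hookP p 0) * sstarFrac n (hookP 0 q) := by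
  have hkey := SShook.key n p q hn
  have hV : algebraMap (MvPolynomial (Fin n) ℚ) (FractionRing (MvPolynomial (Fin n) ℚ))
      (SShook.Dt n (SShook.mdel n)) ≠ 0 := by
    intro h
    exact SShook.Dt_mdel_ne_zero n (IsFractionRing.injective (MvPolynomial (Fin n) ℚ)
      (FractionRing (MvPolynomial (Fin n) ℚ)) (by rwa [map_zero]))
  rw [SShook.sstarFrac_hook n (p + 1) q, SShook.sstarFrac_hook n p (q + 1),
    SShook.sstarFrac_hook n p q, SShook.sstarFrac_hook n p 0, SShook.sstarFrac_hook n 0 q]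
  have hmap := congrArg (algebraMap (MvPolynomial (Fin n) ℚ)
    (FractionRing (MvPolynomial (Fin n) ℚ))) hkey
  simp only [_root_.map_mul, _root_.map_add, _root_.map_one, map_natCast] at hmap
  field_simp
  linear_combination hmap


end
end

section
/- Let (aᵢ)_{i≥1} and (bᵢ)_{i≥1} be sequences of complex numbers and let p' ≥ 0 be an integer.is Then the following identity of formal power series in t holds: t^{p'+1} / ∏_{i=1}^{p'+1}(1−bᵢt) = Σ_{p=p'}^{∞} h_{p−p'}(b₁,…,b_{p'+1}; −a₁,…,−a_p) · t^{p+1} / ∏_{i=1}^{p+1}(1−aᵢt). (Equivalently, with u = 1/t: 1/((u−b₁)⋯(u−b_{p'+1})) = Σ_{p≥p'} h_{p−p'}(b₁,…,b_{p'+1}; −a₁,…,−a_p) / ((u−a₁)⋯(u−a_{p+1})).) -/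
open Finset

noncomputable section

/-- value of the elementary symmetric polynomial `e_k` at `c₁,…,c_m` -/
def esymmVal {m : ℕ} (c : Fin m → ℂ) (k : ℕ) : ℂ :=
  ∑ s ∈ (Finset.univ : Finset (Fin m)).powersetCard k, ∏ i ∈ s, c i

/-- value of the complete homogeneous symmetric polynomial `h_k` at `c₁,…,c_m` -/
def hsymmVal {m : ℕ} (c : Fin m → ℂ) (k : ℕ) : ℂ :=
  ∑ s : Sym (Fin m) k, ((s : Multiset (Fin m)).map c).prod

/-- value of the supersymmetric complete homogeneous polynomial
`h_k(x₁,…,x_{m₁}; y₁,…,y_{m₂}) = ∑_{r=0}^{k} h_r(x)·e_{k-r}(y)` -/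
def sshVal (k : ℕ) {m₁ m₂ : ℕ} (xv : Fin m₁ → ℂ) (yv : Fin m₂ → ℂ) : ℂ :=
  ∑ r ∈ Finset.range (k + 1), hsymmVal xv r * esymmVal yv (k - r)


section ExpansionAux

open PowerSeries

lemma inv_unique' {f g h : PowerSeries ℂ} (hg : f * g = 1) (hh : f * h = 1) : g = h := by
  calc g = g * (f * h) := by rw [hh, mul_one]
  _ = (f * g) * h := by ring
  _ = h := by rw [hg, one_mul]

lemma one_sub_mul_geom (c : ℂ) :
    (1 - PowerSeries.C c * X) * PowerSeries.mk (fun n => c ^ n) = 1 := by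
  ext n
  rw [sub_mul, one_mul, mul_assoc, map_sub]
  cases n with
  | zero => simp
  | succ n => simp [pow_succ]; ring

lemma denomInv_spec (c : ℕ → ℂ) (k : ℕ) :
    (∏ i ∈ Finset.range k, (1 - PowerSeries.C (c i) * X)) * denomInv ℂ c k = 1 := by
  apply PowerSeries.mul_invOfUnit
  rw [map_prod]
  simp

lemma denomInv_eq_geom (c : ℕ → ℂ) (k : ℕ) :
    denomInv ℂ c k = ∏ i ∈ Finset.range k, PowerSeries.mk (fun n => c i ^ n) := by
  refine inv_unique' (denomInv_spec c k) ?_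
  rw [← Finset.prod_mul_distrib]
  simp [one_sub_mul_geom]

lemma coeff_geom_prod (c : ℕ → ℂ) (k j : ℕ) :
    PowerSeries.coeff j (∏ i ∈ Finset.range k, PowerSeries.mk (fun n => c i ^ n)) =
      hsymmVal (fun i : Fin k => c i) j := by
  rw [← Fin.prod_univ_eq_prod_range (fun i => PowerSeries.mk (fun n => c i ^ n)) k,
    PowerSeries.coeff_prod]
  simp only [coeff_mk]
  rw [hsymmVal]
  refine Finset.sum_bij' (i := fun l hl => (⟨Finsupp.toMultiset l, by
      rw [Finsupp.card_toMultiset, Finsupp.sum_fintype _ _ (fun _ => rfl)]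
      exact (Finset.mem_finsuppAntidiag.mp hl).1⟩ : Sym (Fin k) j))
    (j := fun s _ => Multiset.toFinsupp (s : Multiset (Fin k))) ?_ ?_ ?_ ?_ ?_
  · intro l hl
    exact Finset.mem_univ _
  · intro s _
    rw [Finset.mem_finsuppAntidiag]
    refine ⟨?_, Finset.subset_univ _⟩
    refine Eq.trans ?_ s.2
    try dsimp only
    rw [← Multiset.toFinset_sum_count_eq]
    refine (Finset.sum_subset (Finset.subset_univ _) ?_).symm
    intro x _ hx
    simp only [Multiset.toFinsupp_apply]
    exact Multiset.count_eq_zero_of_notMem (fun hmem => hx (Multiset.mem_toFinset.mpr hmem))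
  · intro l hl
    simp
  · intro s hs
    exact Subtype.ext (Multiset.toFinsupp_toMultiset _)
  · intro l hl
    simp only [Sym.coe_mk]
    rw [Finsupp.toMultiset_map, Finsupp.prod_toMultiset,
      Finsupp.prod_mapDomain_index (by simp) (fun a m n => pow_add a m n),
      Finsupp.prod_fintype _ _ (by simp)]

lemma coeff_prod_one_add {ι : Type*} [DecidableEq ι] (c : ι → ℂ) (s : Finset ι) (k : ℕ) :
    PowerSeries.coeff k (∏ i ∈ s, (1 + PowerSeries.C (c i) * X)) =
      ∑ t ∈ s.powersetCard k, ∏ i ∈ t, c i := by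
  induction s using Finset.induction_on generalizing k with
  | empty =>
    cases k with
    | zero => simp
    | succ k =>
      rw [Finset.powersetCard_eq_empty.mpr (by simp)]
      simp
  | @insert a s ha ih =>
    rw [Finset.prod_insert ha, add_mul, one_mul, map_add]
    cases k with
    | zero =>
      simp only [Finset.powersetCard_zero]
      rw [mul_assoc]
      simp [ih 0]
    | succ k =>
      rw [Finset.powersetCard_succ_insert ha, Finset.sum_union, Finset.sum_image]
      · rw [mul_assoc]
        have hX : (PowerSeries.coeff (k+1)) (PowerSeries.C (c a) * (X * ∏ i ∈ s, (1 + PowerSeries.C (c i) * X))) = c a * PowerSeries.coeff k (∏ i ∈ s, (1 + PowerSeries.C (c i) * X)) := by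
          rw [PowerSeries.coeff_C_mul, PowerSeries.coeff_succ_X_mul]
        rw [hX, ih, ih, Finset.mul_sum]
        congr 1
        refine Finset.sum_congr rfl fun t ht => ?_
        have hat : a ∉ t := fun h =>
          ha ((Finset.mem_powersetCard.mp ht).1 h)
        rw [Finset.prod_insert hat]
      · intro t1 h1 t2 h2 h
        have h1' : a ∉ t1 := fun h' => ha ((Finset.mem_powersetCard.mp h1).1 h')
        have h2' : a ∉ t2 := fun h' => ha ((Finset.mem_powersetCard.mp h2).1 h')
        rw [← Finset.erase_insert h1', ← Finset.erase_insert h2', h]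
      · rw [Finset.disjoint_right]
        intro t ht hts
        obtain ⟨u, hu, rfl⟩ := Finset.mem_image.mp ht
        exact ha ((Finset.mem_powersetCard.mp hts).1 (Finset.mem_insert_self a u))

def tailPS (m : ℕ) (f : PowerSeries ℂ) : PowerSeries ℂ :=
  PowerSeries.mk fun j => if j < m then 0 else PowerSeries.coeff j f

lemma tailPS_zero (f : PowerSeries ℂ) : tailPS 0 f = f := by
  ext n; simp [tailPS]

lemma coeff_mul_one_sub (g : PowerSeries ℂ) (c : ℂ) (n : ℕ) :
    PowerSeries.coeff n (g * (1 - PowerSeries.C c * X)) =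
      PowerSeries.coeff n g - c * (if n = 0 then 0 else PowerSeries.coeff (n - 1) g) := by
  rw [mul_sub, mul_one, map_sub, mul_comm g, mul_assoc, PowerSeries.coeff_C_mul, mul_comm X g]
  cases n with
  | zero => simp
  | succ n => rw [PowerSeries.coeff_succ_mul_X]; simp

lemma tailPS_step (m : ℕ) (f : PowerSeries ℂ) (c : ℂ) :
    tailPS m f * (1 - PowerSeries.C c * X) =
      tailPS (m + 1) (f * (1 - PowerSeries.C c * X)) +
        PowerSeries.C (PowerSeries.coeff m f) * X ^ m := by
  ext n
  rw [coeff_mul_one_sub, map_add, PowerSeries.coeff_C_mul, PowerSeries.coeff_X_pow]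
  simp only [tailPS, PowerSeries.coeff_mk, coeff_mul_one_sub]
  split_ifs <;> simp_all <;> try ring1
  all_goals omega

lemma tailPS_coeff_mul_eq_zero {m n : ℕ} (h : n < m) (f g : PowerSeries ℂ) :
    PowerSeries.coeff n (tailPS m f * g) = 0 := by
  rw [PowerSeries.coeff_mul]
  refine Finset.sum_eq_zero fun p hp => ?_
  have hp1 : p.1 ≤ n := by
    have := Finset.HasAntidiagonal.mem_antidiagonal.mp hp
    omega
  have : PowerSeries.coeff p.1 (tailPS m f) = 0 := by
    simp [tailPS, if_pos (by omega : p.1 < m)]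
  rw [this, zero_mul]

lemma invA_succ (a : ℕ → ℂ) (P : ℕ) :
    denomInv ℂ (fun i => a (i + 1)) P =
      (1 - PowerSeries.C (a (P + 1)) * X) * denomInv ℂ (fun i => a (i + 1)) (P + 1) := by
  refine inv_unique' (denomInv_spec (fun i => a (i + 1)) P) ?_
  have h := denomInv_spec (fun i => a (i + 1)) (P + 1)
  rw [Finset.prod_range_succ] at h
  rw [← mul_assoc]
  exact h

lemma main_ind (a b : ℕ → ℂ) (p' P : ℕ) (hP : p' ≤ P) :
    X ^ (p' + 1) * denomInv ℂ (fun i => b (i + 1)) (p' + 1) =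
      (∑ p ∈ Finset.Ico p' P,
        PowerSeries.C (PowerSeries.coeff (p - p')
            ((∏ i ∈ Finset.range p, (1 - PowerSeries.C (a (i + 1)) * X)) *
              denomInv ℂ (fun i => b (i + 1)) (p' + 1))) *
          X ^ (p + 1) * denomInv ℂ (fun i => a (i + 1)) (p + 1)) +
      X ^ (p' + 1) *
        (tailPS (P - p')
          ((∏ i ∈ Finset.range P, (1 - PowerSeries.C (a (i + 1)) * X)) *
            denomInv ℂ (fun i => b (i + 1)) (p' + 1)) *
          denomInv ℂ (fun i => a (i + 1)) P) := by
  induction P, hP using Nat.le_induction with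
  | base =>
    rw [Finset.Ico_self, Finset.sum_empty, zero_add, Nat.sub_self, tailPS_zero]
    have h1 := denomInv_spec (fun i => a (i + 1)) p'
    have h2 : ((∏ i ∈ Finset.range p', (1 - PowerSeries.C (a (i + 1)) * X)) *
        denomInv ℂ (fun i => b (i + 1)) (p' + 1)) * denomInv ℂ (fun i => a (i + 1)) p' =
        denomInv ℂ (fun i => b (i + 1)) (p' + 1) := by
      calc ((∏ i ∈ Finset.range p', (1 - PowerSeries.C (a (i + 1)) * X)) *
          denomInv ℂ (fun i => b (i + 1)) (p' + 1)) * denomInv ℂ (fun i => a (i + 1)) p'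
          = ((∏ i ∈ Finset.range p', (1 - PowerSeries.C (a (i + 1)) * X)) *
            denomInv ℂ (fun i => a (i + 1)) p') * denomInv ℂ (fun i => b (i + 1)) (p' + 1) := by
            ring
        _ = denomInv ℂ (fun i => b (i + 1)) (p' + 1) := by rw [h1, one_mul]
    rw [h2]
  | succ P hP ih =>
    rw [ih, Finset.sum_Ico_succ_top hP, add_assoc]
    congr 1
    rw [invA_succ a P]
    set F := denomInv ℂ (fun i => a (i + 1)) (P + 1) with hF
    set invB := denomInv ℂ (fun i => b (i + 1)) (p' + 1) with hB
    set AP := ∏ i ∈ Finset.range P, (1 - PowerSeries.C (a (i + 1)) * X) with hAP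
    set c := a (P + 1) with hc
    have hA2 : AP * invB * (1 - PowerSeries.C c * X) =
        (∏ i ∈ Finset.range (P + 1), (1 - PowerSeries.C (a (i + 1)) * X)) * invB := by
      rw [Finset.prod_range_succ]; ring
    have hsub : P + 1 - p' = (P - p') + 1 := by omega
    have hXpow : (X : PowerSeries ℂ) ^ (p' + 1) * X ^ (P - p') = X ^ (P + 1) := by
      rw [← pow_add]; congr 1; omega
    calc X ^ (p' + 1) * (tailPS (P - p') (AP * invB) * ((1 - PowerSeries.C c * X) * F))
        = X ^ (p' + 1) * ((tailPS (P - p') (AP * invB) * (1 - PowerSeries.C c * X)) * F) := by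
          ring
      _ = X ^ (p' + 1) * ((tailPS ((P - p') + 1) (AP * invB * (1 - PowerSeries.C c * X)) +
            PowerSeries.C (PowerSeries.coeff (P - p') (AP * invB)) * X ^ (P - p')) * F) := by
          rw [tailPS_step]
      _ = PowerSeries.C (PowerSeries.coeff (P - p') (AP * invB)) * X ^ (P + 1) * F +
          X ^ (p' + 1) * (tailPS (P + 1 - p')
            ((∏ i ∈ Finset.range (P + 1), (1 - PowerSeries.C (a (i + 1)) * X)) * invB) * F) := by
          rw [hA2, hsub, ← hXpow]; ring

lemma coeff_denomInv (c : ℕ → ℂ) (k j : ℕ) :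
    PowerSeries.coeff j (denomInv ℂ c k) = hsymmVal (fun i : Fin k => c i) j := by
  rw [denomInv_eq_geom, coeff_geom_prod]

lemma coeff_Apoly (a : ℕ → ℂ) (p k : ℕ) :
    PowerSeries.coeff k (∏ i ∈ Finset.range p, (1 - PowerSeries.C (a (i + 1)) * X)) =
      esymmVal (fun i : Fin p => -a ((i : ℕ) + 1)) k := by
  have h1 : ∀ i ∈ Finset.range p, (1 - PowerSeries.C (a (i + 1)) * X) =
      (1 + PowerSeries.C (-a (i + 1)) * X) := by
    intro i _; rw [map_neg]; ring
  rw [Finset.prod_congr rfl h1,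
    ← Fin.prod_univ_eq_prod_range (fun i => (1 + PowerSeries.C (-a (i + 1)) * X)) p,
    coeff_prod_one_add]
  rfl

lemma coeff_X_pow_mul_le {k n : ℕ} (h : k ≤ n) (f : PowerSeries ℂ) :
    PowerSeries.coeff n (X ^ k * f) = PowerSeries.coeff (n - k) f := by
  obtain ⟨d, rfl⟩ := Nat.exists_eq_add_of_le h
  rw [add_comm, PowerSeries.coeff_X_pow_mul]
  simp

lemma coeff_X_pow_mul_lt {k n : ℕ} (h : n < k) (f : PowerSeries ℂ) :
    PowerSeries.coeff n (X ^ k * f) = 0 := by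
  rw [PowerSeries.coeff_mul]
  refine Finset.sum_eq_zero fun p hp => ?_
  have := Finset.HasAntidiagonal.mem_antidiagonal.mp hp
  rw [PowerSeries.coeff_X_pow, if_neg (by omega), zero_mul]

lemma w_eq (a b : ℕ → ℂ) (p' p : ℕ) :
    PowerSeries.coeff (p - p')
        ((∏ i ∈ Finset.range p, (1 - PowerSeries.C (a (i + 1)) * X)) *
          denomInv ℂ (fun i => b (i + 1)) (p' + 1)) =
      sshVal (p - p') (fun i : Fin (p' + 1) => b ((i : ℕ) + 1))
        (fun i : Fin p => -a ((i : ℕ) + 1)) := by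
  set k := p - p' with hk
  rw [PowerSeries.coeff_mul, Finset.Nat.sum_antidiagonal_eq_sum_range_succ_mk]
  simp only [coeff_Apoly, coeff_denomInv]
  rw [sshVal, ← Finset.sum_range_reflect]
  refine Finset.sum_congr rfl fun j hj => ?_
  have hj' := Finset.mem_range.mp hj
  have h1 : k + 1 - 1 - j = k - j := by omega
  rw [h1, Nat.sub_sub_self (by omega : j ≤ k), mul_comm]

end ExpansionAux

/-- For sequences `(aᵢ)_{i≥1}`, `(bᵢ)_{i≥1}` in `ℂ` and `p' ≥ 0`, the identity
of formal power series in `t`: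
`t^{p'+1}/∏_{i=1}^{p'+1}(1-bᵢt) = ∑_{p≥p'} h_{p-p'}(b₁,…,b_{p'+1}; -a₁,…,-a_p)·t^{p+1}/∏_{i=1}^{p+1}(1-aᵢt)`
(the right-hand side written coefficientwise). -/
theorem expansion_lemma
    (a b : ℕ → ℂ) (p' : ℕ) :
    PowerSeries.X ^ (p' + 1) * denomInv ℂ (fun i => b (i + 1)) (p' + 1) =
      PowerSeries.mk (fun N =>
        ∑ p ∈ Finset.Ico p' N,
          sshVal (p - p') (fun i : Fin (p' + 1) => b ((i : ℕ) + 1))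
              (fun i : Fin p => -a ((i : ℕ) + 1)) *
            PowerSeries.coeff (R := ℂ) (N - (p + 1)) (denomInv ℂ (fun i => a (i + 1)) (p + 1))) := by
  ext N
  rw [PowerSeries.coeff_mk]
  by_cases hN : N ≤ p'
  · rw [Finset.Ico_eq_empty (by omega), Finset.sum_empty, coeff_X_pow_mul_lt (by omega)]
  · push_neg at hN
    rw [main_ind a b p' N (by omega), map_add, map_sum]
    have hrem : PowerSeries.coeff N (PowerSeries.X ^ (p' + 1) *
        (tailPS (N - p')
          ((∏ i ∈ Finset.range N, (1 - PowerSeries.C (a (i + 1)) * PowerSeries.X)) *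
            denomInv ℂ (fun i => b (i + 1)) (p' + 1)) *
          denomInv ℂ (fun i => a (i + 1)) N)) = 0 := by
      rw [coeff_X_pow_mul_le (by omega : p' + 1 ≤ N)]
      exact tailPS_coeff_mul_eq_zero (by omega) _ _
    rw [hrem, add_zero]
    refine Finset.sum_congr rfl fun p hp => ?_
    have hp' := Finset.mem_Ico.mp hp
    rw [mul_assoc, PowerSeries.coeff_C_mul, coeff_X_pow_mul_le (by omega : p + 1 ≤ N), w_eq]

end
end
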